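/- Expected weak duality with horizon truncation: in the stochastic online resource allocation model, for every μ ∈ ℝ^m with μ ≥ 0 componentwise and every real τ ∈ [0, T]: E[ OPT(γ⃗) ] ≤ τ·D̄(μ | P) + (T − τ)·r̄. -/

import Mathlib

open MeasureTheory Finset

/-- Expected weak duality with horizon truncation. -/
theorem stmt14
    {Ω S : Type*} [MeasurableSpace Ω] [MeasurableSpace S]
    (P : Measure Ω) [IsProbabilityMeasure P]
    (T m d : ℕ) (hT : 0 < T) (hm : 0 < m)
    (ρ : Fin m → ℝ) (hρ : ∀ j, 0 < ρ j)
    (rbar : ℝ) (hrbar : 0 ≤ rbar)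
    (X : S → Set (Fin d → ℝ))
    (r : S → (Fin d → ℝ) → ℝ)
    (g : S → (Fin d → ℝ) → (Fin m → ℝ))
    (hX0 : ∀ s, (0 : Fin d → ℝ) ∈ X s)
    (hr0 : ∀ s, r s 0 = 0)
    (hrpos : ∀ s, ∀ x ∈ X s, 0 ≤ r s x)
    (hrbd : ∀ s, ∀ x ∈ X s, r s x ≤ rbar)
    (hg0 : ∀ s, g s 0 = 0)
    (hgpos : ∀ s, ∀ x ∈ X s, ∀ j, 0 ≤ g s x j)
    (γ : Fin T → Ω → S) (hγmeas : ∀ t, Measurable (γ t))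
    (Pdist : Measure S) [IsProbabilityMeasure Pdist]
    (hlaw : ∀ t, Measure.map (γ t) P = Pdist)
    (hindep : ProbabilityTheory.iIndepFun γ P)
    (OPT : Ω → ℝ)
    (hOPT : ∀ ω, OPT ω = sSup { v | ∃ x : Fin T → (Fin d → ℝ),
      (∀ t, x t ∈ X (γ t ω)) ∧ (∀ j, ∑ t, g (γ t ω) (x t) j ≤ (T : ℝ) * ρ j) ∧
      v = ∑ t, r (γ t ω) (x t) })
    (hOPTint : Integrable OPT P)
    (μ : Fin m → ℝ) (hμ : ∀ j, 0 ≤ μ j)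
    (rstar : S → ℝ)
    (hrstar : ∀ s, rstar s = sSup { v | ∃ x ∈ X s, v = r s x - ∑ j, μ j * g s x j })
    (hrstarint : Integrable rstar Pdist)
    (Dbar : ℝ) (hDbar : Dbar = (∫ s, rstar s ∂Pdist) + ∑ j, μ j * ρ j)
    (τ : ℝ) (hτ : τ ∈ Set.Icc (0 : ℝ) T) :
    ∫ ω, OPT ω ∂P ≤ τ * Dbar + ((T : ℝ) - τ) * rbar := by
  -- basic facts about rstar
  have hval : ∀ s, ∀ x ∈ X s, r s x - ∑ j, μ j * g s x j ≤ rstar s := by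
    intro s x hx
    rw [hrstar s]
    apply le_csSup
    · refine ⟨rbar, ?_⟩
      rintro v ⟨y, hy, rfl⟩
      have h1 : 0 ≤ ∑ j, μ j * g s y j :=
        Finset.sum_nonneg fun j _ => mul_nonneg (hμ j) (hgpos s y hy j)
      linarith [hrbd s y hy]
    · exact ⟨x, hx, rfl⟩
  have hrstar0 : ∀ s, 0 ≤ rstar s := by
    intro s
    have := hval s 0 (hX0 s)
    simp [hr0 s, hg0 s] at this
    exact this
  -- pointwise bound 1 : OPT ω ≤ ∑ t, rstar (γ t ω) + T * ∑ μρ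
  have hpt1 : ∀ ω, OPT ω ≤ (∑ t, rstar (γ t ω)) + (T : ℝ) * ∑ j, μ j * ρ j := by
    intro ω
    rw [hOPT ω]
    apply Real.sSup_le
    · rintro v ⟨x, hx, hfeas, rfl⟩
      have step : ∀ t, r (γ t ω) (x t) ≤ rstar (γ t ω) + ∑ j, μ j * g (γ t ω) (x t) j := by
        intro t
        have := hval (γ t ω) (x t) (hx t)
        linarith
      calc ∑ t, r (γ t ω) (x t)
          ≤ ∑ t, (rstar (γ t ω) + ∑ j, μ j * g (γ t ω) (x t) j) :=
            Finset.sum_le_sum fun t _ => step t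
        _ = (∑ t, rstar (γ t ω)) + ∑ j, μ j * ∑ t, g (γ t ω) (x t) j := by
            rw [Finset.sum_add_distrib, Finset.sum_comm]
            simp [Finset.mul_sum]
        _ ≤ (∑ t, rstar (γ t ω)) + ∑ j, μ j * ((T : ℝ) * ρ j) := by
            gcongr with j _
            · exact hμ j
            · exact hfeas j
        _ = (∑ t, rstar (γ t ω)) + (T : ℝ) * ∑ j, μ j * ρ j := by
            rw [Finset.mul_sum]
            congr 1
            exact Finset.sum_congr rfl fun j _ => by ring
    · have h1 : 0 ≤ ∑ t, rstar (γ t ω) :=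
        Finset.sum_nonneg fun t _ => hrstar0 (γ t ω)
      have h2 : 0 ≤ (T : ℝ) * ∑ j, μ j * ρ j :=
        mul_nonneg (by positivity)
          (Finset.sum_nonneg fun j _ => mul_nonneg (hμ j) (hρ j).le)
      linarith
  -- pointwise bound 2 : OPT ω ≤ T * rbar
  have hpt2 : ∀ ω, OPT ω ≤ (T : ℝ) * rbar := by
    intro ω
    rw [hOPT ω]
    apply Real.sSup_le
    · rintro v ⟨x, hx, _, rfl⟩
      calc ∑ t, r (γ t ω) (x t) ≤ ∑ _t : Fin T, rbar :=
            Finset.sum_le_sum fun t _ => hrbd (γ t ω) (x t) (hx t)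
        _ = (T : ℝ) * rbar := by simp [mul_comm]
    · positivity
  -- integrability of rstar ∘ γ t
  have hintc : ∀ t, Integrable (fun ω => rstar (γ t ω)) P := by
    intro t
    have h := hrstarint
    rw [← hlaw t] at h
    exact (integrable_map_measure h.aestronglyMeasurable
      (hγmeas t).aemeasurable).mp h
  have hintsum : Integrable (fun ω => ∑ t, rstar (γ t ω)) P :=
    integrable_finset_sum _ fun t _ => hintc t
  -- identify integrals
  have hintval : ∀ t, ∫ ω, rstar (γ t ω) ∂P = ∫ s, rstar s ∂Pdist := by
    intro t
    rw [← hlaw t]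
    exact (integral_map (hγmeas t).aemeasurable
      (by rw [hlaw t]; exact hrstarint.aestronglyMeasurable)).symm
  -- integral bound 1
  have hI1 : ∫ ω, OPT ω ∂P ≤ (T : ℝ) * Dbar := by
    have := integral_mono hOPTint (hintsum.add (integrable_const _)) (fun ω => hpt1 ω)
    simp only [Pi.add_apply] at this
    rw [integral_add hintsum (integrable_const _), integral_finset_sum _ (fun t _ => hintc t),
      integral_const] at this
    simp only [hintval] at this
    have hmeas : P.real Set.univ = 1 := by simp
    rw [hmeas] at this
    calc ∫ ω, OPT ω ∂P
        ≤ (∑ _t : Fin T, ∫ s, rstar s ∂Pdist) + 1 • ((T : ℝ) * ∑ j, μ j * ρ j) := this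
      _ = (T : ℝ) * Dbar := by
          simp [hDbar, Finset.sum_const]
          ring
  -- integral bound 2
  have hI2 : ∫ ω, OPT ω ∂P ≤ (T : ℝ) * rbar := by
    have := integral_mono hOPTint (integrable_const _) (fun ω => hpt2 ω)
    rw [integral_const] at this
    simpa using this
  obtain ⟨hτ0, hτT⟩ := hτ
  have hTpos : (0 : ℝ) < T := by exact_mod_cast hT
  nlinarith [mul_nonneg hτ0 (sub_nonneg.mpr hI1), mul_nonneg (sub_nonneg.mpr hτT) (sub_nonneg.mpr hI2)]
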